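/- Suppose each bad event is dependent with at most d ≥ 2 bad events (including itself) and there are m bad events in total. Then for every positive integer t, the number of isomorphism classes of collectible witness DAGs with exactly t nodes is at most m·e·(e·d)^t. -/

import Mathlib

open scoped BigOperators ENNReal Classical

namespace LLL

/-- Two bad events are dependent iff their variable sets intersect. -/
def Dep {n : ℕ} {E : Type} (S : E → Finset (Fin n)) (b b' : E) : Prop :=
  (S b ∩ S b').Nonempty

/-- A witness DAG: a finite DAG with nodes labeled by bad events, where any two
nodes with dependent labels are joined by an edge (in one direction), and nodes
with non-dependent labels have no edge. -/
structure WDag (n : ℕ) (E : Type) (S : E → Finset (Fin n)) where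
  size : ℕ
  label : Fin size → E
  edge : Fin size → Fin size → Prop
  acyclic : ∀ v, ¬ Relation.TransGen edge v v
  edge_dep : ∀ v w, edge v w → Dep S (label v) (label w)
  dep_edge : ∀ v w, v ≠ w → Dep S (label v) (label w) → edge v w ∨ edge w v

namespace WDag

variable {n : ℕ} {E : Type} {S : E → Finset (Fin n)}

/-- Isomorphism of witness DAGs. -/
def Iso (G G' : WDag n E S) : Prop :=
  ∃ e : Fin G.size ≃ Fin G'.size,
    (∀ v, G'.label (e v) = G.label v) ∧ ∀ v w, G'.edge (e v) (e w) ↔ G.edge v w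

theorem Iso.refl (G : WDag n E S) : Iso G G :=
  ⟨Equiv.refl _, fun _ => rfl, fun _ _ => Iff.rfl⟩

theorem Iso.symm {G G' : WDag n E S} (h : Iso G G') : Iso G' G := by
  obtain ⟨e, hl, he⟩ := h
  refine ⟨e.symm, fun v => ?_, fun v w => ?_⟩
  · simpa using (hl (e.symm v)).symm
  · simpa using (he (e.symm v) (e.symm w)).symm

theorem Iso.trans {G₁ G₂ G₃ : WDag n E S} (h12 : Iso G₁ G₂) (h23 : Iso G₂ G₃) :
    Iso G₁ G₃ := by
  obtain ⟨e, hl, he⟩ := h12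
  obtain ⟨f, hl', he'⟩ := h23
  refine ⟨e.trans f, fun v => ?_, fun v w => ?_⟩
  · rw [Equiv.trans_apply, hl' (e v), hl v]
  · rw [Equiv.trans_apply, Equiv.trans_apply, he' (e v) (e w), he v w]

instance wdSetoid (n : ℕ) (E : Type) (S : E → Finset (Fin n)) : Setoid (WDag n E S) :=
  ⟨Iso, ⟨Iso.refl, Iso.symm, Iso.trans⟩⟩

/-- Isomorphism classes of witness DAGs. -/
def WClass (n : ℕ) (E : Type) (S : E → Finset (Fin n)) : Type :=
  Quotient (wdSetoid n E S)

/-- The weight of a witness DAG: the product of the probabilities of its labels. -/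
noncomputable def wt (P : E → ℝ) (G : WDag n E S) : ℝ := ∏ v, P (G.label v)

theorem wt_invariant (P : E → ℝ) {G G' : WDag n E S} (h : Iso G G') :
    wt P G = wt P G' := by
  obtain ⟨e, hl, _⟩ := h
  exact Fintype.prod_equiv e (fun v => P (G.label v)) (fun v => P (G'.label v))
    (fun v => by simp only [hl v])

/-- The weight, as a function on isomorphism classes. -/
noncomputable def cwt (P : E → ℝ) : WClass n E S → ℝ :=
  Quotient.lift (wt P) fun _ _ h => wt_invariant P h

theorem size_invariant {G G' : WDag n E S} (h : Iso G G') : G.size = G'.size := by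
  obtain ⟨e, -, -⟩ := h
  simpa using Fintype.card_congr e

/-- The adjusted weight `a_ρ(G) = w(G) (1+ρ)^{|G|}`. -/
noncomputable def awt (P : E → ℝ) (ρ : ℝ) (G : WDag n E S) : ℝ :=
  wt P G * (1 + ρ) ^ G.size

theorem awt_invariant (P : E → ℝ) (ρ : ℝ) {G G' : WDag n E S} (h : Iso G G') :
    awt P ρ G = awt P ρ G' := by
  unfold awt
  rw [wt_invariant P h, size_invariant h]

/-- The adjusted weight, as a function on isomorphism classes. -/
noncomputable def cawt (P : E → ℝ) (ρ : ℝ) : WClass n E S → ℝ :=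
  Quotient.lift (awt P ρ) fun _ _ h => awt_invariant P ρ h

/-- A node is a sink if it has no outgoing edge. -/
def IsSink (G : WDag n E S) (v : Fin G.size) : Prop := ∀ w, ¬ G.edge v w

/-- A witness DAG has a single sink. -/
def SingleSink (G : WDag n E S) : Prop := ∃! v, IsSink G v

/-- A witness DAG has a single sink, labeled by `b`. -/
def SinkLabeled (G : WDag n E S) (b : E) : Prop :=
  ∃ v, IsSink G v ∧ G.label v = b ∧ ∀ w, IsSink G w → w = v

end WDag

/-- A set of bad events is independent if no two distinct members are dependent. -/
def Indep {n : ℕ} {E : Type} (S : E → Finset (Fin n)) (I : Finset E) : Prop :=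
  ∀ b ∈ I, ∀ b' ∈ I, b ≠ b' → ¬ Dep S b b'

/-- The independent-set polynomial `Q(I,p)`. -/
noncomputable def Q {n : ℕ} {E : Type} [Fintype E] (S : E → Finset (Fin n))
    (p : E → ℝ) (I : Finset E) : ℝ :=
  ∑ J ∈ Finset.univ.filter (fun J : Finset E => I ⊆ J ∧ Indep S J),
    (-1 : ℝ) ^ (J.card - I.card) * ∏ b ∈ J, p b

/-- The Shearer criterion for the probability vector `p`. -/
def Shearer {n : ℕ} {E : Type} [Fintype E] (S : E → Finset (Fin n)) (p : E → ℝ) : Prop :=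
  0 < Q S p ∅ ∧ ∀ I : Finset E, Indep S I → 0 ≤ Q S p I


/-- A witness DAG is collectible if there is a bad event dependent with the
labels of all of its sink nodes. -/
def WDag.Collectible {n : ℕ} {E : Type} {S : E → Finset (Fin n)} (G : WDag n E S) : Prop :=
  ∃ b : E, ∀ v, WDag.IsSink G v → Dep S b (G.label v)


namespace WDag
variable {n : ℕ} {E : Type} {S : E → Finset (Fin n)}

-- auxiliary development
theorem dep_symm {a b : E} (h : Dep S a b) : Dep S b a := by
  rwa [Dep, Finset.inter_comm]

theorem edge_irrefl (G : WDag n E S) (v : Fin G.size) : ¬ G.edge v v :=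
  fun h => G.acyclic v (Relation.TransGen.single h)

theorem edgeWF (G : WDag n E S) : WellFounded (fun w v : Fin G.size => G.edge v w) := by
  have irr : IsIrrefl (Fin G.size) (fun w v => Relation.TransGen G.edge v w) :=
    ⟨fun v h => G.acyclic v h⟩
  have tr : IsTrans (Fin G.size) (fun w v => Relation.TransGen G.edge v w) :=
    ⟨fun a b c hab hbc => hbc.trans hab⟩
  have wf : WellFounded (fun w v : Fin G.size => Relation.TransGen G.edge v w) :=
    @Finite.wellFounded_of_trans_of_irrefl _ _ _ tr irr
  exact Subrelation.wf (fun h => Relation.TransGen.single h) wf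

noncomputable def depth (G : WDag n E S) : Fin G.size → ℕ :=
  (edgeWF G).fix fun v ih =>
    Finset.univ.sup fun w => if h : G.edge v w then ih w h + 1 else 0

theorem depth_eq (G : WDag n E S) (v : Fin G.size) :
    G.depth v = Finset.univ.sup fun w => if G.edge v w then G.depth w + 1 else 0 := by
  rw [depth, WellFounded.fix_eq]
  simp only [dite_eq_ite]

theorem depth_lt_of_edge {G : WDag n E S} {v w : Fin G.size} (h : G.edge v w) :
    G.depth w < G.depth v := by
  have h2 := Finset.le_sup (f := fun w => if G.edge v w then G.depth w + 1 else 0)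
    (Finset.mem_univ w)
  simp only [if_pos h] at h2
  rw [depth_eq G v]
  omega

theorem isSink_of_depth_eq_zero {G : WDag n E S} {v : Fin G.size} (h : G.depth v = 0) :
    G.IsSink v := by
  intro w hw
  have := depth_lt_of_edge hw
  omega

theorem depth_eq_zero_of_isSink {G : WDag n E S} {v : Fin G.size} (h : G.IsSink v) :
    G.depth v = 0 := by
  rw [depth_eq]
  refine Nat.le_zero.mp (Finset.sup_le fun w _ => ?_)
  rw [if_neg (h w)]

theorem exists_edge_depth {G : WDag n E S} {v : Fin G.size} {k : ℕ}
    (h : G.depth v = k + 1) : ∃ w, G.edge v w ∧ G.depth w = k := by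
  have hne : (Finset.univ : Finset (Fin G.size)).Nonempty := ⟨v, Finset.mem_univ v⟩
  obtain ⟨w, -, hw⟩ := Finset.exists_mem_eq_sup Finset.univ hne
    (fun w => if G.edge v w then G.depth w + 1 else 0)
  rw [depth_eq G v] at h
  rw [hw] at h
  by_cases he : G.edge v w
  · rw [if_pos he] at h
    exact ⟨w, he, by omega⟩
  · rw [if_neg he] at h
    omega

/-- reach set -/
noncomputable def reach (G : WDag n E S) (v : Fin G.size) : Finset (Fin G.size) :=
  Finset.univ.filter fun w => Relation.ReflTransGen G.edge v w

theorem depth_lt_card_reach (G : WDag n E S) :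
    ∀ k (v : Fin G.size), G.depth v = k → k + 1 ≤ (G.reach v).card := by
  intro k
  induction k with
  | zero =>
    intro v _
    have : v ∈ G.reach v := Finset.mem_filter.mpr ⟨Finset.mem_univ v, .refl⟩
    exact Finset.card_pos.mpr ⟨v, this⟩
  | succ k ih =>
    intro v hv
    obtain ⟨w, hew, hdw⟩ := exists_edge_depth hv
    have hsub : G.reach w ⊆ G.reach v := by
      intro u hu
      rw [reach, Finset.mem_filter] at hu ⊢
      exact ⟨hu.1, .head hew hu.2⟩
    have hvnot : v ∉ G.reach w := by
      rw [reach, Finset.mem_filter]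
      rintro ⟨-, hrt⟩
      rcases (Relation.reflTransGen_iff_eq_or_transGen.mp hrt) with h | h
      · exact edge_irrefl G v (h ▸ hew)
      · exact G.acyclic v (h.head hew)
    have hvin : v ∈ G.reach v := Finset.mem_filter.mpr ⟨Finset.mem_univ v, .refl⟩
    have : G.reach w ⊂ G.reach v := ⟨hsub, fun hs => hvnot (hs hvin)⟩
    have := Finset.card_lt_card this
    have := ih w hdw
    omega

theorem depth_lt_size (G : WDag n E S) (v : Fin G.size) : G.depth v < G.size := by
  have h1 := depth_lt_card_reach G (G.depth v) v rfl
  have h2 : (G.reach v).card ≤ G.size := by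
    simpa using Finset.card_le_card (Finset.subset_univ (G.reach v))
  omega

theorem labels_nonemptyS {G : WDag n E S}
    (hb : ∃ b : E, ∀ v, G.IsSink v → Dep S b (G.label v)) (v : Fin G.size) :
    (S (G.label v)).Nonempty := by
  by_cases hs : G.IsSink v
  · obtain ⟨b, hbv⟩ := hb
    obtain ⟨x, hx⟩ := hbv v hs
    exact ⟨x, (Finset.mem_inter.mp hx).2⟩
  · rw [IsSink] at hs
    push_neg at hs
    obtain ⟨w, hw⟩ := hs
    obtain ⟨x, hx⟩ := G.edge_dep v w hw
    exact ⟨x, (Finset.mem_inter.mp hx).1⟩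

theorem key_inj {G : WDag n E S} (hS : ∀ v, (S (G.label v)).Nonempty)
    {v w : Fin G.size} (hl : G.label v = G.label w) (hd : G.depth v = G.depth w) :
    v = w := by
  by_contra hne
  have hdep : Dep S (G.label v) (G.label w) := by
    rw [hl, Dep, Finset.inter_self]
    exact hS w
  rcases G.dep_edge v w hne hdep with h | h
  · exact absurd hd (Nat.ne_of_gt (depth_lt_of_edge h))
  · exact absurd hd.symm (Nat.ne_of_gt (depth_lt_of_edge h))

theorem edge_iff {G : WDag n E S} (v w : Fin G.size) :
    G.edge v w ↔ Dep S (G.label v) (G.label w) ∧ G.depth w < G.depth v := by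
  constructor
  · exact fun h => ⟨G.edge_dep v w h, depth_lt_of_edge h⟩
  · rintro ⟨hdep, hlt⟩
    have hne : v ≠ w := fun h => by subst h; omega
    rcases G.dep_edge v w hne hdep with h | h
    · exact h
    · exact absurd (depth_lt_of_edge h) (by omega)

noncomputable def labelsAt (G : WDag n E S) (k : ℕ) : Finset E :=
  (Finset.univ.filter fun v => G.depth v = k).image G.label

noncomputable def Dmax (G : WDag n E S) : ℕ := Finset.univ.sup G.depth

theorem depth_le_Dmax (G : WDag n E S) (v : Fin G.size) : G.depth v ≤ G.Dmax :=
  Finset.le_sup (Finset.mem_univ v)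

noncomputable def layers (G : WDag n E S) : List (Finset E) :=
  (List.range (G.Dmax + 1)).map G.labelsAt

theorem mem_labelsAt {G : WDag n E S} {k : ℕ} {x : E} :
    x ∈ G.labelsAt k ↔ ∃ v, G.depth v = k ∧ G.label v = x := by
  simp [labelsAt, Finset.mem_image, Finset.mem_filter]

theorem exists_depth_le (G : WDag n E S) :
    ∀ m (v : Fin G.size), G.depth v = m → ∀ k ≤ m, ∃ w, G.depth w = k := by
  intro m
  induction m with
  | zero => intro v hv k hk; exact ⟨v, by omega⟩
  | succ m ih =>
    intro v hv k hk
    rcases Nat.eq_or_lt_of_le hk with h | h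
    · exact ⟨v, by omega⟩
    · obtain ⟨w, -, hdw⟩ := exists_edge_depth hv
      exact ih w hdw k (by omega)

theorem labelsAt_nonempty {G : WDag n E S} (hpos : 0 < G.size) {k : ℕ}
    (hk : k ≤ G.Dmax) : (G.labelsAt k).Nonempty := by
  have hne : (Finset.univ : Finset (Fin G.size)).Nonempty := by
    simpa [Finset.univ_nonempty_iff] using Fin.pos_iff_nonempty.mp hpos
  obtain ⟨v0, -, hv0⟩ := Finset.exists_mem_eq_sup Finset.univ hne G.depth
  obtain ⟨w, hw⟩ := exists_depth_le G G.Dmax v0 hv0.symm k hk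
  exact ⟨G.label w, mem_labelsAt.mpr ⟨w, hw, rfl⟩⟩

theorem card_labelsAt {G : WDag n E S} (hS : ∀ v, (S (G.label v)).Nonempty) (k : ℕ) :
    (G.labelsAt k).card = (Finset.univ.filter fun v => G.depth v = k).card := by
  apply Finset.card_image_of_injOn
  intro v hv w hw hl
  rw [Finset.mem_coe, Finset.mem_filter] at hv hw
  exact key_inj hS hl (hv.2.trans hw.2.symm)

theorem sum_card_layers {G : WDag n E S} (hS : ∀ v, (S (G.label v)).Nonempty) :
    ((G.layers).map Finset.card).sum = G.size := by
  have h1 : G.size = ∑ k ∈ Finset.range (G.Dmax + 1),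
      (Finset.univ.filter fun v => G.depth v = k).card := by
    have := Finset.card_eq_sum_card_fiberwise
      (f := G.depth) (s := (Finset.univ : Finset (Fin G.size)))
      (t := Finset.range (G.Dmax + 1))
      (fun v _ => Finset.mem_range.mpr (by have := depth_le_Dmax G v; omega))
    simpa using this
  have h2 : ∀ m : ℕ, (((List.range m).map G.labelsAt).map Finset.card).sum
      = ∑ k ∈ Finset.range m, (Finset.univ.filter fun v => G.depth v = k).card := by
    intro m
    induction m with
    | zero => simp
    | succ m ih =>
      rw [List.range_succ, Finset.sum_range_succ, ← ih]
      simp [card_labelsAt hS]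
  rw [layers, h2]
  exact h1.symm

theorem labelsAt_chain {G : WDag n E S} {k : ℕ} {x : E} (hx : x ∈ G.labelsAt (k + 1)) :
    ∃ y ∈ G.labelsAt k, Dep S x y := by
  obtain ⟨v, hv, hl⟩ := mem_labelsAt.mp hx
  obtain ⟨w, hew, hdw⟩ := exists_edge_depth hv
  exact ⟨G.label w, mem_labelsAt.mpr ⟨w, hdw, rfl⟩, hl ▸ G.edge_dep v w hew⟩

/-- Reconstruction: witness DAGs with equal layer lists are isomorphic. -/
theorem iso_of_layers_eq {G G' : WDag n E S}
    (hS : ∀ v, (S (G.label v)).Nonempty) (hS' : ∀ v, (S (G'.label v)).Nonempty)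
    (h : G.layers = G'.layers) : Iso G G' := by
  have hD : G.Dmax = G'.Dmax := by
    have := congrArg List.length h
    simpa [layers] using this
  have hla : ∀ k, k ≤ G.Dmax → G.labelsAt k = G'.labelsAt k := by
    intro k hk
    have h2 := congrArg (fun l => l[k]?) h
    simp only [layers, List.getElem?_map, ← hD] at h2
    rw [List.getElem?_range (by omega)] at h2
    simpa using h2
  -- forward map
  have hf : ∀ v : Fin G.size, ∃ v' : Fin G'.size,
      G'.depth v' = G.depth v ∧ G'.label v' = G.label v := by
    intro v
    have : G.label v ∈ G.labelsAt (G.depth v) := mem_labelsAt.mpr ⟨v, rfl, rfl⟩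
    rw [hla _ (depth_le_Dmax G v)] at this
    obtain ⟨v', hd, hl⟩ := mem_labelsAt.mp this
    exact ⟨v', hd, hl⟩
  have hg : ∀ v' : Fin G'.size, ∃ v : Fin G.size,
      G.depth v = G'.depth v' ∧ G.label v = G'.label v' := by
    intro v'
    have : G'.label v' ∈ G'.labelsAt (G'.depth v') := mem_labelsAt.mpr ⟨v', rfl, rfl⟩
    rw [← hla _ (by rw [hD]; exact depth_le_Dmax G' v')] at this
    obtain ⟨v, hd, hl⟩ := mem_labelsAt.mp this
    exact ⟨v, hd, hl⟩
  choose f hfd hfl using hf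
  choose g hgd hgl using hg
  have hgf : ∀ v, g (f v) = v := fun v =>
    key_inj hS ((hgl (f v)).trans (hfl v)) (((hgd (f v)).trans (hfd v)))
  have hfg : ∀ v', f (g v') = v' := fun v' =>
    key_inj hS' ((hfl (g v')).trans (hgl v')) (((hfd (g v')).trans (hgd v')))
  refine ⟨⟨f, g, hgf, hfg⟩, fun v => hfl v, fun v w => ?_⟩
  show G'.edge (f v) (f w) ↔ G.edge v w
  rw [edge_iff (G := G') (f v) (f w), edge_iff (G := G) v w,
    hfl v, hfl w, hfd v, hfd w]

theorem collectible_iso {G G' : WDag n E S}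
    (h : Iso G G')
    (hc : ∃ b : E, ∀ v, G.IsSink v → Dep S b (G.label v)) :
    ∃ b : E, ∀ v, G'.IsSink v → Dep S b (G'.label v) := by
  obtain ⟨e, hl, he⟩ := h
  obtain ⟨b, hb⟩ := hc
  refine ⟨b, fun v' hs' => ?_⟩
  have hs : G.IsSink (e.symm v') := by
    intro w hw
    have := (he (e.symm v') w).mpr hw
    rw [Equiv.apply_symm_apply] at this
    exact hs' (e w) this
  have := hb (e.symm v') hs
  rw [← hl (e.symm v'), Equiv.apply_symm_apply] at this
  exact this

end WDag

section Count

variable {n : ℕ} {E : Type} [Fintype E] {S : E → Finset (Fin n)}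

/-- events dependent with some member of `A` -/
noncomputable def Nbr (S : E → Finset (Fin n)) (A : Finset E) : Finset E :=
  Finset.univ.filter fun x => ∃ a ∈ A, Dep S x a

theorem card_Nbr_le {d : ℕ} (hdep : ∀ b : E, (Finset.univ.filter fun b' => Dep S b b').card ≤ d)
    (A : Finset E) : (Nbr S A).card ≤ d * A.card := by
  have hsub : Nbr S A ⊆ A.biUnion fun a => Finset.univ.filter fun x => Dep S x a := by
    intro x hx
    rw [Nbr, Finset.mem_filter] at hx
    obtain ⟨-, a, ha, hdx⟩ := hx
    exact Finset.mem_biUnion.mpr ⟨a, ha, Finset.mem_filter.mpr ⟨Finset.mem_univ x, hdx⟩⟩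
  calc (Nbr S A).card ≤ _ := Finset.card_le_card hsub
    _ ≤ ∑ a ∈ A, (Finset.univ.filter fun x => Dep S x a).card := Finset.card_biUnion_le
    _ ≤ ∑ _a ∈ A, d := by
        refine Finset.sum_le_sum fun a _ => ?_
        have : (Finset.univ.filter fun x => Dep S x a)
            = (Finset.univ.filter fun x => Dep S a x) := by
          apply Finset.filter_congr
          intro x _
          exact ⟨fun h => WDag.dep_symm h, fun h => WDag.dep_symm h⟩
        rw [this]
        exact hdep a
    _ = d * A.card := by rw [Finset.sum_const, smul_eq_mul]; ring

/-- layer sequences: fueled recursion -/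
noncomputable def Seqs (S : E → Finset (Fin n)) : ℕ → Finset E → ℕ → Finset (List (Finset E))
  | 0, _, rem => if rem = 0 then {[]} else ∅
  | (f+1), A, rem => if rem = 0 then {[]} else
      (((Nbr S A).powerset.filter fun L => L.Nonempty ∧ L.card ≤ rem).biUnion
        fun L => (Seqs S f L (rem - L.card)).image (fun ℓ => L :: ℓ))

def Ok (S : E → Finset (Fin n)) : Finset E → List (Finset E) → Prop
  | _, [] => True
  | A, (L :: ℓ) => L.Nonempty ∧ L ⊆ Nbr S A ∧ Ok S L ℓ

theorem mem_Seqs : ∀ (ℓ : List (Finset E)) (A : Finset E) (f rem : ℕ),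
    Ok S A ℓ → (ℓ.map Finset.card).sum = rem → ℓ.length ≤ f → ℓ ∈ Seqs S f A rem := by
  intro ℓ
  induction ℓ with
  | nil =>
    intro A f rem _ hsum _
    simp only [List.map_nil, List.sum_nil] at hsum
    cases f <;> simp [Seqs, ← hsum]
  | cons L ℓ ih =>
    intro A f rem hok hsum hlen
    obtain ⟨hLne, hLsub, hok'⟩ := hok
    simp only [List.map_cons, List.sum_cons] at hsum
    have hrem : rem ≠ 0 := by
      have := Finset.card_pos.mpr hLne
      omega
    obtain ⟨f', rfl⟩ : ∃ f', f = f' + 1 := by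
      cases f
      · simp at hlen
      · exact ⟨_, rfl⟩
    rw [Seqs, if_neg hrem]
    refine Finset.mem_biUnion.mpr ⟨L, ?_, ?_⟩
    · refine Finset.mem_filter.mpr ⟨Finset.mem_powerset.mpr hLsub, hLne, by omega⟩
    · refine Finset.mem_image.mpr ⟨ℓ, ?_, rfl⟩
      refine ih L f' (rem - L.card) hok' (by omega) (by simpa using hlen)

theorem one_add_inv_pow_le {d : ℕ} (hd : 1 ≤ d) : (1 + 1/(d:ℝ)) ^ d ≤ Real.exp 1 := by
  have hd0 : (d:ℝ) ≠ 0 := by positivity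
  have h1 : (1 + 1/(d:ℝ)) ≤ Real.exp (1/(d:ℝ)) := by
    have := Real.add_one_le_exp (1/(d:ℝ))
    linarith
  have h2 : (1 + 1/(d:ℝ)) ^ d ≤ (Real.exp (1/(d:ℝ))) ^ d := by
    apply pow_le_pow_left₀ (by positivity) h1
  calc (1 + 1/(d:ℝ)) ^ d ≤ (Real.exp (1/(d:ℝ))) ^ d := h2
    _ = Real.exp ((d:ℝ) * (1/(d:ℝ))) := (Real.exp_nat_mul _ d).symm
    _ = Real.exp 1 := by rw [mul_one_div, div_self hd0]

theorem sum_powerset_pow_card (M : Finset E) (x : ℝ) :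
    ∑ L ∈ M.powerset, x ^ L.card = (1 + x) ^ M.card := by
  have := Finset.prod_add (fun _ : E => x) (fun _ : E => (1:ℝ)) M
  simp only [Finset.prod_const, one_pow, mul_one] at this
  rw [this.symm, add_comm]

theorem seqs_card_le {d : ℕ} (hd : 1 ≤ d)
    (hdep : ∀ b : E, (Finset.univ.filter fun b' => Dep S b b').card ≤ d) :
    ∀ (f : ℕ) (A : Finset E) (rem : ℕ),
      ((Seqs S f A rem).card : ℝ) ≤ Real.exp 1 ^ A.card * (Real.exp 1 * d) ^ rem := by
  have he1 : (1:ℝ) ≤ Real.exp 1 := by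
    have := Real.add_one_le_exp (1:ℝ); linarith
  have hd0 : (0:ℝ) < (d:ℝ) := by exact_mod_cast hd
  have hed : (0:ℝ) < Real.exp 1 * d := by positivity
  intro f
  induction f with
  | zero =>
    intro A rem
    by_cases h : rem = 0
    · subst h
      rw [Seqs, if_pos rfl]
      simp only [Finset.card_singleton, Nat.cast_one, pow_zero, mul_one]
      exact one_le_pow₀ he1
    · rw [Seqs, if_neg h]
      simp only [Finset.card_empty, Nat.cast_zero]
      positivity
  | succ f ih =>
    intro A rem
    by_cases h : rem = 0
    · subst h
      rw [Seqs, if_pos rfl]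
      simp only [Finset.card_singleton, Nat.cast_one, pow_zero, mul_one]
      exact one_le_pow₀ he1
    · rw [Seqs, if_neg h]
      set P := (Nbr S A).powerset.filter fun L => L.Nonempty ∧ L.card ≤ rem with hP
      have step1 : ((P.biUnion fun L => (Seqs S f L (rem - L.card)).image
          (fun ℓ => L :: ℓ)).card : ℝ) ≤ ∑ L ∈ P, ((Seqs S f L (rem - L.card)).card : ℝ) := by
        calc ((P.biUnion fun L => (Seqs S f L (rem - L.card)).image (fun ℓ => L :: ℓ)).card : ℝ)
            ≤ ((∑ L ∈ P, ((Seqs S f L (rem - L.card)).image (fun ℓ => L :: ℓ)).card : ℕ) : ℝ) := by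
              exact_mod_cast Finset.card_biUnion_le
          _ = ∑ L ∈ P, (((Seqs S f L (rem - L.card)).image (fun ℓ => L :: ℓ)).card : ℝ) := by
              push_cast; ring
          _ ≤ ∑ L ∈ P, ((Seqs S f L (rem - L.card)).card : ℝ) := by
              refine Finset.sum_le_sum fun L _ => ?_
              exact_mod_cast Finset.card_image_le
      have step2 : ∑ L ∈ P, ((Seqs S f L (rem - L.card)).card : ℝ)
          ≤ ∑ L ∈ P, (1/(d:ℝ)) ^ L.card * (Real.exp 1 * d) ^ rem := by
        refine Finset.sum_le_sum fun L hL => ?_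
        rw [hP, Finset.mem_filter] at hL
        obtain ⟨-, -, hcard⟩ := hL
        calc ((Seqs S f L (rem - L.card)).card : ℝ)
            ≤ Real.exp 1 ^ L.card * (Real.exp 1 * d) ^ (rem - L.card) := ih L (rem - L.card)
          _ = (1/(d:ℝ)) ^ L.card * (Real.exp 1 * d) ^ rem := by
              have hkey : (1/(d:ℝ)) * (Real.exp 1 * d) = Real.exp 1 := by
                field_simp
              calc Real.exp 1 ^ L.card * (Real.exp 1 * d) ^ (rem - L.card)
                  = ((1/(d:ℝ)) * (Real.exp 1 * d)) ^ L.card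
                    * (Real.exp 1 * d) ^ (rem - L.card) := by rw [hkey]
                _ = (1/(d:ℝ)) ^ L.card * ((Real.exp 1 * d) ^ L.card
                    * (Real.exp 1 * d) ^ (rem - L.card)) := by
                    rw [mul_pow, mul_assoc]
                _ = (1/(d:ℝ)) ^ L.card * (Real.exp 1 * d) ^ rem := by
                    rw [← pow_add, Nat.add_sub_cancel' hcard]
      have step3 : ∑ L ∈ P, (1/(d:ℝ)) ^ L.card
          ≤ (Real.exp 1) ^ A.card - 1 := by
        have hsub : P ⊆ (Nbr S A).powerset.erase ∅ := by
          intro L hL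
          rw [hP, Finset.mem_filter] at hL
          exact Finset.mem_erase.mpr ⟨Finset.nonempty_iff_ne_empty.mp hL.2.1, hL.1⟩
        have h1 : ∑ L ∈ P, (1/(d:ℝ)) ^ L.card
            ≤ ∑ L ∈ (Nbr S A).powerset.erase ∅, (1/(d:ℝ)) ^ L.card := by
          refine Finset.sum_le_sum_of_subset_of_nonneg hsub fun L _ _ => by positivity
        have h2 : ∑ L ∈ (Nbr S A).powerset.erase ∅, (1/(d:ℝ)) ^ L.card
            = (1 + 1/(d:ℝ)) ^ (Nbr S A).card - 1 := by
          have h3 := Finset.add_sum_erase (Nbr S A).powerset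
            (fun L => (1/(d:ℝ)) ^ L.card) (Finset.empty_mem_powerset _)
          rw [sum_powerset_pow_card] at h3
          simp only [Finset.card_empty, pow_zero] at h3
          linarith
        have h4 : (1 + 1/(d:ℝ)) ^ (Nbr S A).card ≤ Real.exp 1 ^ A.card := by
          calc (1 + 1/(d:ℝ)) ^ (Nbr S A).card ≤ (1 + 1/(d:ℝ)) ^ (d * A.card) := by
                apply pow_le_pow_right₀ (by nlinarith [one_div_nonneg.mpr hd0.le])
                exact card_Nbr_le hdep A
            _ = ((1 + 1/(d:ℝ)) ^ d) ^ A.card := by rw [pow_mul]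
            _ ≤ Real.exp 1 ^ A.card := by
                apply pow_le_pow_left₀ (by positivity) (one_add_inv_pow_le hd)
        linarith
      calc ((P.biUnion fun L => (Seqs S f L (rem - L.card)).image (fun ℓ => L :: ℓ)).card : ℝ)
          ≤ ∑ L ∈ P, (1/(d:ℝ)) ^ L.card * (Real.exp 1 * d) ^ rem := step1.trans step2
        _ = (∑ L ∈ P, (1/(d:ℝ)) ^ L.card) * (Real.exp 1 * d) ^ rem := by
            rw [Finset.sum_mul]
        _ ≤ (Real.exp 1 ^ A.card - 1) * (Real.exp 1 * d) ^ rem := by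
            apply mul_le_mul_of_nonneg_right step3 (by positivity)
        _ ≤ Real.exp 1 ^ A.card * (Real.exp 1 * d) ^ rem := by
            apply mul_le_mul_of_nonneg_right _ (by positivity)
            linarith
end Count

section Final

variable {n : ℕ} {E : Type} [Fintype E] {S : E → Finset (Fin n)}

theorem Dmax_lt_size {G : WDag n E S} (hpos : 0 < G.size) : G.Dmax < G.size := by
  have hne : (Finset.univ : Finset (Fin G.size)).Nonempty := by
    simpa [Finset.univ_nonempty_iff] using Fin.pos_iff_nonempty.mp hpos
  obtain ⟨v0, -, hv0⟩ := Finset.exists_mem_eq_sup Finset.univ hne G.depth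
  rw [WDag.Dmax, hv0]
  exact WDag.depth_lt_size G v0

theorem ok_layers {G : WDag n E S} (hpos : 0 < G.size)
    {b : E} (hb : ∀ v, G.IsSink v → Dep S b (G.label v)) :
    Ok S {b} G.layers := by
  have haux : ∀ (c j : ℕ) (A : Finset E), j + c = G.Dmax + 1 →
      (∀ x ∈ G.labelsAt j, x ∈ Nbr S A) →
      Ok S A ((List.range c).map fun i => G.labelsAt (j + i)) := by
    intro c
    induction c with
    | zero => intro j A _ _; trivial
    | succ c ih =>
      intro j A hj hsub
      rw [List.range_succ_eq_map, List.map_cons, List.map_map]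
      have hmaps : (fun i => G.labelsAt (j + i)) ∘ Nat.succ
          = fun i => G.labelsAt ((j + 1) + i) := by
        funext i
        simp only [Function.comp_apply]
        congr 1
        omega
      rw [hmaps]
      have hjD : j ≤ G.Dmax := by omega
      refine ⟨WDag.labelsAt_nonempty hpos hjD, ?_, ?_⟩
      · intro x hx
        simpa using hsub x hx
      · refine ih (j + 1) (G.labelsAt j) (by omega) ?_
        intro x hx
        obtain ⟨y, hy, hdep⟩ := WDag.labelsAt_chain hx
        exact Finset.mem_filter.mpr ⟨Finset.mem_univ x, y, hy, hdep⟩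
  have h0 : ∀ x ∈ G.labelsAt 0, x ∈ Nbr S ({b} : Finset E) := by
    intro x hx
    obtain ⟨v, hv, hl⟩ := WDag.mem_labelsAt.mp hx
    have hs : G.IsSink v := WDag.isSink_of_depth_eq_zero hv
    refine Finset.mem_filter.mpr ⟨Finset.mem_univ x, b, Finset.mem_singleton_self b, ?_⟩
    exact WDag.dep_symm (hl ▸ hb v hs)
  have := haux (G.Dmax + 1) 0 {b} (by omega) h0
  simpa [WDag.layers] using this

theorem layers_mem_Seqs {G : WDag n E S} {t : ℕ} (hsize : G.size = t) (hpos : 0 < t)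
    {b : E} (hb : ∀ v, G.IsSink v → Dep S b (G.label v)) :
    G.layers ∈ Seqs S t ({b} : Finset E) t := by
  have hpos' : 0 < G.size := by omega
  refine mem_Seqs G.layers {b} t t (ok_layers hpos' hb) ?_ ?_
  · rw [WDag.sum_card_layers (WDag.labels_nonemptyS ⟨b, hb⟩), hsize]
  · have h1 : G.layers.length = G.Dmax + 1 := by simp [WDag.layers]
    have := Dmax_lt_size hpos'
    omega

end Final


/-- If each bad event is dependent with at most d ≥ 2 bad events
(including itself) and there are m bad events, then for every positive integer
t, the number of isomorphism classes of collectible witness DAGs with exactly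
t nodes is at most m·e·(e·d)^t. -/
theorem stmt8 {n : ℕ} {E : Type} [Fintype E] (S : E → Finset (Fin n)) (d t : ℕ)
    (hd : 2 ≤ d)
    (hdep : ∀ b : E, (Finset.univ.filter fun b' => Dep S b b').card ≤ d)
    (ht : 0 < t) :
    {c : WDag.WClass n E S | ∃ G : WDag n E S,
        Quotient.mk (WDag.wdSetoid n E S) G = c ∧ WDag.Collectible G ∧ G.size = t}.Finite ∧
    (({c : WDag.WClass n E S | ∃ G : WDag n E S,
        Quotient.mk (WDag.wdSetoid n E S) G = c ∧ WDag.Collectible G ∧ G.size = t}.ncard : ℝ)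
      ≤ (Fintype.card E : ℝ) * Real.exp 1 * (Real.exp 1 * d) ^ t) := by
  classical
  set 𝒞 := {c : WDag.WClass n E S | ∃ G : WDag n E S,
      Quotient.mk (WDag.wdSetoid n E S) G = c ∧ WDag.Collectible G ∧ G.size = t} with h𝒞
  set F : WDag.WClass n E S → List (Finset E) :=
    fun c => WDag.layers (Quotient.out c) with hF
  set T : Finset (List (Finset E)) :=
    Finset.univ.biUnion (fun b : E => Seqs S t ({b} : Finset E) t) with hT
  -- representatives are collectible of size t
  have hrep : ∀ c ∈ 𝒞, (Quotient.out c).Collectible ∧ (Quotient.out c).size = t := by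
    rintro c ⟨G, hG, hcol, hsize⟩
    have hiso : WDag.Iso (Quotient.out c) G :=
      Quotient.exact ((Quotient.out_eq c).trans hG.symm)
    constructor
    · obtain ⟨b, hb⟩ := WDag.collectible_iso (WDag.Iso.symm hiso) hcol
      exact ⟨b, hb⟩
    · rw [WDag.size_invariant hiso, hsize]
  have hin : ∀ c ∈ 𝒞, F c ∈ T := by
    intro c hc
    obtain ⟨⟨b, hb⟩, hsize⟩ := hrep c hc
    exact Finset.mem_biUnion.mpr ⟨b, Finset.mem_univ b, layers_mem_Seqs hsize ht hb⟩
  have hinj : Set.InjOn F 𝒞 := by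
    intro c hc c' hc' hFeq
    obtain ⟨⟨b, hb⟩, hsize⟩ := hrep c hc
    obtain ⟨⟨b', hb'⟩, hsize'⟩ := hrep c' hc'
    have hiso : WDag.Iso (Quotient.out c) (Quotient.out c') :=
      WDag.iso_of_layers_eq (WDag.labels_nonemptyS ⟨b, hb⟩)
        (WDag.labels_nonemptyS ⟨b', hb'⟩) hFeq
    have := Quotient.sound (s := WDag.wdSetoid n E S) hiso
    exact (Quotient.out_eq c).symm.trans (this.trans (Quotient.out_eq c'))
  have himgfin : (F '' 𝒞).Finite :=
    Set.Finite.subset T.finite_toSet (by rintro x ⟨c, hc, rfl⟩; exact hin c hc)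
  have hfin : 𝒞.Finite := Set.Finite.of_finite_image himgfin hinj
  refine ⟨hfin, ?_⟩
  have h1 : 𝒞.ncard = (F '' 𝒞).ncard := (Set.ncard_image_of_injOn hinj).symm
  have h2 : (F '' 𝒞).ncard ≤ T.card := by
    have := Set.ncard_le_ncard
      (show F '' 𝒞 ⊆ ↑T by rintro x ⟨c, hc, rfl⟩; exact hin c hc) T.finite_toSet
    simpa [Set.ncard_coe_finset] using this
  have h3 : (T.card : ℝ) ≤ (Fintype.card E : ℝ) * (Real.exp 1 * (Real.exp 1 * d) ^ t) := by
    calc (T.card : ℝ)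
        ≤ ((∑ b : E, (Seqs S t ({b} : Finset E) t).card : ℕ) : ℝ) := by
          exact_mod_cast Finset.card_biUnion_le
      _ = ∑ b : E, ((Seqs S t ({b} : Finset E) t).card : ℝ) := by push_cast; ring
      _ ≤ ∑ _b : E, Real.exp 1 * (Real.exp 1 * d) ^ t := by
          refine Finset.sum_le_sum fun b _ => ?_
          have := seqs_card_le (by omega : 1 ≤ d) hdep t ({b} : Finset E) t
          simpa using this
      _ = (Fintype.card E : ℝ) * (Real.exp 1 * (Real.exp 1 * d) ^ t) := by
          rw [Finset.sum_const, Finset.card_univ, nsmul_eq_mul]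
  calc (𝒞.ncard : ℝ) = ((F '' 𝒞).ncard : ℝ) := by rw [h1]
    _ ≤ (T.card : ℝ) := by exact_mod_cast h2
    _ ≤ (Fintype.card E : ℝ) * (Real.exp 1 * (Real.exp 1 * d) ^ t) := h3
    _ = (Fintype.card E : ℝ) * Real.exp 1 * (Real.exp 1 * d) ^ t := by ring


end LLL
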